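/- arXiv:2109.08854 — 2 statements merged into one kernel-verified Lean document; each statement's English description precedes it below -/
import Mathlib

section
/- An FSA S is not strongly periodically D-detectable with respect to T_spec if and only if in its observer S_obs at least one of the following holds: (7) there are a reachable state q of S_obs and x∈q such that (q×q)∩T_spec≠∅ and there is a transition sequence x→^{s1}x'→^{s2}x' in S for some s1∈(T_uo)*, s2∈(T_uo)^+, x'∈X; (8) there is a reachable transition cycle of S_obs such that every state q of the cycle satisfies (q×q)∩T_spec≠∅. -/
/-- A finite-state automaton (FSA) `S = (X, T, X0, δ, Σ, ℓ)`:
states `X`, events `T`, outputs `O` (the alphabet Σ), initial states `init`,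
transition relation `delta`, and labeling function `label` where `none` encodes ε. -/
structure FSA (X T O : Type) where
  init : Set X
  delta : X → T → X → Prop
  label : T → Option O

/-- Composed events of the (ε-extended) self-composition: pairs of observable
events with the same label, unobservable events on the left/right component,
and the added ε event. -/
inductive CEvent (T : Type) where
  | both : T → T → CEvent T
  | left : T → CEvent T
  | right : T → CEvent T
  | eps : CEvent T

namespace FSA

variable {X T O : Type}

/-- Extension of `delta` to finite event sequences: `x →^s x'`. -/
def Run (M : FSA X T O) : X → List T → X → Prop
  | x, [], x' => x = x'
  | x, t :: s, x' => ∃ y, M.delta x t y ∧ Run M y s x'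

/-- The label sequence `ℓ(s)` of a finite event sequence. -/
def labelSeq (M : FSA X T O) (s : List T) : List O :=
  s.filterMap M.label

/-- Membership in `L^ω(S)`: infinite event sequences generated from some initial state. -/
def InLomega (M : FSA X T O) (s : ℕ → T) : Prop :=
  ∃ x : ℕ → X, x 0 ∈ M.init ∧ ∀ i, M.delta (x i) (s i) (x (i + 1))

/-- `s'` is a finite prefix of the infinite sequence `s`. -/
def IsPrefixOf (s' : List T) (s : ℕ → T) : Prop :=
  ∀ i : Fin s'.length, s'.get i = s i

/-- The current-state estimate `M(S,σ)`. -/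
def est (M : FSA X T O) (σ : List O) : Set X :=
  {x | ∃ x0 ∈ M.init, ∃ s : List T, M.labelSeq s = σ ∧ M.Run x0 s x}

/-- Strong periodic detectability (SPD). -/
def SPD (M : FSA X T O) : Prop :=
  ∃ k : ℕ, 0 < k ∧ ∀ s : ℕ → T, M.InLomega s → ∀ s' : List T, IsPrefixOf s' s →
    ∃ s'' : List T, (M.labelSeq s'').length < k ∧ IsPrefixOf (s' ++ s'') s ∧
      (M.est (M.labelSeq (s' ++ s''))).ncard = 1

/-- Strong periodic D-detectability with respect to `Tspec`. -/
def SPDD (M : FSA X T O) (Tspec : Set (X × X)) : Prop :=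
  ∃ k : ℕ, 0 < k ∧ ∀ s : ℕ → T, M.InLomega s → ∀ s' : List T, IsPrefixOf s' s →
    ∃ s'' : List T, (M.labelSeq s'').length < k ∧ IsPrefixOf (s' ++ s'') s ∧
      (M.est (M.labelSeq (s' ++ s'')) ×ˢ M.est (M.labelSeq (s' ++ s''))) ∩ Tspec = ∅

/-- An unobservable transition sequence `x →^s x'` (all events labeled ε). -/
def UnobsRun (M : FSA X T O) (x : X) (s : List T) (x' : X) : Prop :=
  M.Run x s x' ∧ ∀ t ∈ s, M.label t = none

/-- Unobservable reach `UR` of a set of states. -/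
def UR (M : FSA X T O) (q : Set X) : Set X :=
  {x' | ∃ x ∈ q, ∃ s : List T, M.UnobsRun x s x'}

/-- Observable reach `Reach_σ` of a set of states. -/
def ReachO (M : FSA X T O) (σ : O) (q : Set X) : Set X :=
  {x' | ∃ x ∈ q, ∃ t : T, M.delta x t x' ∧ M.label t = some σ}

/-- Initial state `M(S,ε) = UR(X0)` of the observer/detector. -/
def obsInit (M : FSA X T O) : Set X := M.UR M.init

/-- Observer transition `δ_obs(q,σ) = UR(Reach_σ(q))` (defined when nonempty). -/
def obsTrans (M : FSA X T O) (q : Set X) (σ : O) (q' : Set X) : Prop :=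
  q' = M.UR (M.ReachO σ q) ∧ q'.Nonempty

/-- Sequences of observer transitions. -/
def ObsRun (M : FSA X T O) : Set X → List O → Set X → Prop
  | q, [], q' => q = q'
  | q, σ :: w, q' => ∃ q1, M.obsTrans q σ q1 ∧ ObsRun M q1 w q'

/-- Reachable states of the observer `S_obs`. -/
def ObsReachable (M : FSA X T O) (q : Set X) : Prop :=
  ∃ w : List O, M.ObsRun M.obsInit w q

/-- Detector transition relation `δ_det`. -/
def detTrans (M : FSA X T O) (q : Set X) (σ : O) (q' : Set X) : Prop :=
  (1 < (M.UR (M.ReachO σ q)).ncard ∧ q' ⊆ M.UR (M.ReachO σ q) ∧ q'.ncard = 2) ∨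
  ((M.UR (M.ReachO σ q)).ncard = 1 ∧ q' = M.UR (M.ReachO σ q))

/-- Sequences of detector transitions. -/
def DetRun (M : FSA X T O) : Set X → List O → Set X → Prop
  | q, [], q' => q = q'
  | q, σ :: w, q' => ∃ q1, M.detTrans q σ q1 ∧ DetRun M q1 w q'

/-- Reachable states of the detector `S_det`. -/
def DetReachable (M : FSA X T O) (q : Set X) : Prop :=
  ∃ w : List O, M.DetRun M.obsInit w q

/-- The label of a composed event. -/
def cLabel (M : FSA X T O) : CEvent T → Option O
  | CEvent.both t _ => M.label t
  | CEvent.left _ => none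
  | CEvent.right _ => none
  | CEvent.eps => none

/-- The label sequence of a sequence of composed events. -/
def ccLabelSeq (M : FSA X T O) (s : List (CEvent T)) : List O :=
  s.filterMap M.cLabel

/-- Transition relation `δ'` of the self-composition `CC_A(S)`. -/
def ccTrans (M : FSA X T O) : X × X → CEvent T → X × X → Prop
  | p, CEvent.both t t', p' =>
      M.delta p.1 t p'.1 ∧ M.delta p.2 t' p'.2 ∧
      ∃ σ : O, M.label t = some σ ∧ M.label t' = some σ
  | p, CEvent.left t, p' => M.delta p.1 t p'.1 ∧ M.label t = none ∧ p.2 = p'.2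
  | p, CEvent.right t, p' => p.1 = p'.1 ∧ M.label t = none ∧ M.delta p.2 t p'.2
  | _, CEvent.eps, _ => False

/-- Transition relation of the ε-extended self-composition `CC^ε_A(S)`:
all transitions of `CC_A(S)` plus, for `x1 ≠ x2`, the added ε-transitions
`((x1,x2),ε,(x1,x1))` and `((x1,x2),ε,(x2,x2))` under the stated conditions. -/
def ccEpsTrans (M : FSA X T O) (p : X × X) (e : CEvent T) (p' : X × X) : Prop :=
  M.ccTrans p e p' ∨
  (e = CEvent.eps ∧ p.1 ≠ p.2 ∧ (p' = (p.1, p.1) ∨ p' = (p.2, p.2)) ∧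
    ∃ (t' : CEvent T) (r : X × X),
      M.ccTrans p' t' r ∧ ∀ t'' : CEvent T, ¬ M.ccTrans p t'' r)

/-- Sequences of transitions of `CC^ε_A(S)`. -/
def CCRun (M : FSA X T O) : X × X → List (CEvent T) → X × X → Prop
  | p, [], p' => p = p'
  | p, e :: s, p' => ∃ r, M.ccEpsTrans p e r ∧ CCRun M r s p'

/-- Reachable states of `CC^ε_A(S)` (from `X0 × X0`). -/
def CCReachable (M : FSA X T O) (p : X × X) : Prop :=
  ∃ p0 : X × X, p0.1 ∈ M.init ∧ p0.2 ∈ M.init ∧ ∃ s : List (CEvent T), M.CCRun p0 s p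

/-- A state is reachable in `S`. -/
def StateReachable (M : FSA X T O) (x : X) : Prop :=
  ∃ x0 ∈ M.init, ∃ s : List T, M.Run x0 s x

/-- Deadlock-freeness. -/
def DeadlockFree (M : FSA X T O) : Prop :=
  ∀ x : X, M.StateReachable x → ∃ (t : T) (x' : X), M.delta x t x'

/-- Divergence-freeness (promptness): no reachable unobservable transition cycle. -/
def DivergenceFree (M : FSA X T O) : Prop :=
  ∀ x : X, M.StateReachable x → ∀ s : List T, s ≠ [] →
    (∀ t ∈ s, M.label t = none) → ¬ M.Run x s x

end FSA

namespace FSA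
variable {X T O : Type}

lemma run_append (M : FSA X T O) (s1 s2 : List T) :
    ∀ x x', M.Run x (s1 ++ s2) x' ↔ ∃ y, M.Run x s1 y ∧ M.Run y s2 x' := by
  induction s1 with
  | nil => intro x x'; simp [Run]
  | cons t s ih =>
    intro x x'
    constructor
    · rintro ⟨y, hy, h⟩
      obtain ⟨z, h1, h2⟩ := (ih y x').mp h
      exact ⟨z, ⟨y, hy, h1⟩, h2⟩
    · rintro ⟨z, ⟨y, hy, h1⟩, h2⟩
      exact ⟨y, hy, (ih y x').mpr ⟨z, h1, h2⟩⟩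

lemma labelSeq_append (M : FSA X T O) (a b : List T) :
    M.labelSeq (a ++ b) = M.labelSeq a ++ M.labelSeq b :=
  List.filterMap_append

lemma est_nil (M : FSA X T O) : M.est [] = M.obsInit := by
  ext x
  constructor
  · rintro ⟨x0, h0, s, hl, hr⟩
    exact ⟨x0, h0, s, hr, List.filterMap_eq_nil_iff.mp hl⟩
  · rintro ⟨x0, h0, s, hr, hu⟩
    exact ⟨x0, h0, s, List.filterMap_eq_nil_iff.mpr hu, hr⟩

/-- split event list by label split -/
lemma labelSeq_split (M : FSA X T O) {s : List T} {σ τ : List O}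
    (h : M.labelSeq s = σ ++ τ) :
    ∃ a b, s = a ++ b ∧ M.labelSeq a = σ ∧ M.labelSeq b = τ := by
  induction s generalizing σ with
  | nil =>
    simp [labelSeq] at h
    exact ⟨[], [], rfl, by simp [labelSeq, h.1.symm], by simp [labelSeq, h.2.symm]⟩
  | cons t s ih =>
    by_cases hl : M.label t = none
    · have h' : M.labelSeq s = σ ++ τ := by
        simpa [labelSeq, List.filterMap_cons, hl] using h
      obtain ⟨a, b, rfl, ha, hb⟩ := ih h'
      exact ⟨t :: a, b, rfl, by simp [labelSeq, List.filterMap_cons, hl] at ha ⊢; exact ha, hb⟩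
    · obtain ⟨o, ho⟩ := Option.ne_none_iff_exists'.mp hl
      rw [labelSeq, List.filterMap_cons, ho] at h
      cases σ with
      | nil =>
        cases τ with
        | nil => simp at h
        | cons o' τ' =>
          simp at h
          obtain ⟨rfl, h2⟩ := h
          exact ⟨[], t :: s, rfl, by simp [labelSeq], by
            simp [labelSeq, List.filterMap_cons, ho, h2]⟩
      | cons o' σ' =>
        simp at h
        obtain ⟨rfl, h2⟩ := h
        obtain ⟨a, b, rfl, ha, hb⟩ := ih h2
        exact ⟨t :: a, b, rfl, by simp [labelSeq, List.filterMap_cons, ho] at ha ⊢; exact ha, hb⟩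

lemma labelSeq_single (M : FSA X T O) {s : List T} {o : O}
    (h : M.labelSeq s = [o]) :
    ∃ a t b, s = a ++ t :: b ∧ (∀ u ∈ a, M.label u = none) ∧ M.label t = some o ∧
      (∀ u ∈ b, M.label u = none) := by
  induction s with
  | nil => simp [labelSeq] at h
  | cons t s ih =>
    by_cases hl : M.label t = none
    · have h' : M.labelSeq s = [o] := by simpa [labelSeq, List.filterMap_cons, hl] using h
      obtain ⟨a, u, b, rfl, ha, hu, hb⟩ := ih h'
      refine ⟨t :: a, u, b, rfl, ?_, hu, hb⟩
      intro v hv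
      rcases List.mem_cons.mp hv with rfl | hv
      · exact hl
      · exact ha v hv
    · obtain ⟨o', ho⟩ := Option.ne_none_iff_exists'.mp hl
      rw [labelSeq, List.filterMap_cons, ho] at h
      simp at h
      obtain ⟨rfl, h2⟩ := h
      exact ⟨[], t, s, rfl, by simp, ho, h2⟩

lemma est_snoc (M : FSA X T O) (σ : List O) (o : O) :
    M.est (σ ++ [o]) = M.UR (M.ReachO o (M.est σ)) := by
  ext x'
  constructor
  · rintro ⟨x0, h0, s, hl, hr⟩
    obtain ⟨sa, sb, rfl, hla, hlb⟩ := M.labelSeq_split hl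
    obtain ⟨a, t, b, rfl, hau, hto, hbu⟩ := M.labelSeq_single hlb
    rw [run_append] at hr
    obtain ⟨y, hy, hr2⟩ := hr
    rw [run_append] at hr2
    obtain ⟨z, hz, w, hw, hr4⟩ := hr2
    refine ⟨w, ⟨z, ⟨x0, h0, sa ++ a, ?_, (M.run_append sa a x0 z).mpr ⟨y, hy, hz⟩⟩, t, hw, hto⟩,
      b, hr4, hbu⟩
    rw [labelSeq_append, hla, show M.labelSeq a = [] from List.filterMap_eq_nil_iff.mpr hau,
      List.append_nil]
  · rintro ⟨z, ⟨y, ⟨x0, h0, sa, hla, hra⟩, t, hdt, hto⟩, b, hrb, hbu⟩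
    refine ⟨x0, h0, sa ++ t :: b, ?_, ?_⟩
    · have hb1 : M.labelSeq (t :: b) = [o] := by
        show List.filterMap M.label (t :: b) = [o]
        rw [List.filterMap_cons, hto, List.filterMap_eq_nil_iff.mpr hbu]
      rw [labelSeq_append, hla, hb1]
    · rw [run_append]; exact ⟨y, hra, z, hdt, hrb⟩

lemma obsRun_snoc (M : FSA X T O) {q q' q'' : Set X} {w : List O} {o : O}
    (h1 : M.ObsRun q w q') (h2 : M.obsTrans q' o q'') : M.ObsRun q (w ++ [o]) q'' := by
  induction w generalizing q with
  | nil => cases h1; exact ⟨q'', h2, rfl⟩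
  | cons σ w ih =>
    obtain ⟨q1, ht, hr⟩ := h1
    exact ⟨q1, ht, ih hr⟩

lemma obsRun_est (M : FSA X T O) {w : List O} {q : Set X} :
    ∀ {σ : List O}, M.ObsRun (M.est σ) w q → q = M.est (σ ++ w) := by
  induction w with
  | nil => intro σ h; cases h; simp
  | cons o w ih =>
    intro σ h
    obtain ⟨q1, ⟨rfl, hne⟩, hr⟩ := h
    rw [← M.est_snoc] at hr
    have := ih hr
    simpa using this

lemma obsRun_obsInit (M : FSA X T O) {w : List O} {q : Set X}
    (h : M.ObsRun M.obsInit w q) : q = M.est w := by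
  rw [← est_nil] at h
  simpa using M.obsRun_est h

lemma est_nonempty_obsRun (M : FSA X T O) :
    ∀ (σ : List O), (M.est σ).Nonempty → M.ObsRun M.obsInit σ (M.est σ) := by
  intro σ
  induction σ using List.reverseRecOn with
  | nil => intro _; rw [est_nil]; exact rfl
  | append_singleton σ o ih =>
    intro hne
    have hne' : (M.est σ).Nonempty := by
      obtain ⟨x, hx⟩ := hne
      rw [est_snoc] at hx
      obtain ⟨z, ⟨y, hy, _, _, _⟩, _⟩ := hx
      exact ⟨y, hy⟩
    exact M.obsRun_snoc (ih hne') ⟨M.est_snoc σ o, (M.est_snoc σ o) ▸ hne⟩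

end FSA

namespace FSA
variable {X T O : Type}

/-- extract the state sequence of a finite run, ℕ-indexed -/
lemma run_states (M : FSA X T O) :
    ∀ (u : List T) (x y : X), M.Run x u y →
      ∃ p : ℕ → X, p 0 = x ∧ p u.length = y ∧
        ∀ i (h : i < u.length), M.delta (p i) u[i] (p (i + 1)) := by
  intro u
  induction u with
  | nil =>
    rintro x y rfl
    exact ⟨fun _ => x, rfl, rfl, fun i h => absurd h (by simp)⟩
  | cons t u ih =>
    rintro x y ⟨z, hz, hr⟩
    obtain ⟨p, hp0, hpl, hps⟩ := ih z y hr
    refine ⟨fun j => if j = 0 then x else p (j - 1), by simp, by simp [hpl], ?_⟩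
    intro i h
    cases i with
    | zero => simpa [hp0] using hz
    | succ i =>
      simpa using hps i (by simpa using h)

lemma join_replicate_length {α : Type*} (c : List α) (m : ℕ) :
    ((List.replicate m c).flatten).length = m * c.length := by
  induction m with
  | zero => simp
  | succ m ih => simp [List.replicate_succ, ih, Nat.succ_mul, Nat.add_comm]

lemma join_replicate_getElem {α : Type*} (c : List α) (hc : c ≠ []) (m i : ℕ)
    (h : i < ((List.replicate m c).flatten).length) :
    ((List.replicate m c).flatten)[i] = c.get ⟨i % c.length, Nat.mod_lt _ (List.length_pos_iff.mpr hc)⟩ := by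
  induction m generalizing i with
  | zero => simp at h
  | succ m ih =>
    have he : (List.replicate (m + 1) c).flatten = c ++ (List.replicate m c).flatten := by
      rw [List.replicate_succ, List.flatten_cons]
    have h' : i < (c ++ (List.replicate m c).flatten).length := he ▸ h
    rw [List.getElem_of_eq he h]
    by_cases hi : i < c.length
    · rw [List.getElem_append_left hi]
      simp [Nat.mod_eq_of_lt hi]
    · push_neg at hi
      rw [List.getElem_append_right hi]
      have hlt : i - c.length < ((List.replicate m c).flatten).length := by
        simp only [List.length_append, join_replicate_length] at h' ⊢
        omega
      have hmod : (i - c.length) % c.length = i % c.length := by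
        conv_rhs => rw [← Nat.sub_add_cancel hi]
        rw [Nat.add_mod_right]
      rw [ih (i - c.length) hlt]
      congr 1
      exact Fin.ext hmod

lemma join_replicate_mul {α : Type*} (c : List α) (m d : ℕ) :
    (List.replicate m ((List.replicate d c).flatten)).flatten
      = (List.replicate (m * d) c).flatten := by
  induction m with
  | zero => simp
  | succ m ih =>
    rw [List.replicate_succ, List.flatten_cons, ih, Nat.succ_mul, Nat.add_comm,
      List.replicate_add, List.flatten_append]

/-- Core construction: a reachable loop whose unfolding stays "bad" kills SPDD. -/
lemma notSPDD_of_loop (M : FSA X T O) (Tspec : Set (X × X))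
    (x0 y : X) (a c : List T)
    (hx0 : x0 ∈ M.init) (ha : M.Run x0 a y) (hc : M.Run y c y) (hcne : c ≠ [])
    (hbad : ∀ u : List T,
      (∀ i (h : i < u.length),
        u[i] = c.get ⟨i % c.length, Nat.mod_lt _ (List.length_pos_iff.mpr hcne)⟩) →
      (M.est (M.labelSeq (a ++ u)) ×ˢ M.est (M.labelSeq (a ++ u))) ∩ Tspec ≠ ∅) :
    ¬ M.SPDD Tspec := by
  rintro ⟨k, hk, H⟩
  obtain ⟨pa, hpa0, hpal, hpas⟩ := M.run_states a x0 y ha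
  obtain ⟨pc, hpc0, hpcl, hpcs⟩ := M.run_states c y y hc
  have hL : 0 < c.length := List.length_pos_iff.mpr hcne
  set f : ℕ → T := fun i =>
    if h : i < a.length then a[i] else c.get ⟨(i - a.length) % c.length, Nat.mod_lt _ hL⟩ with hf
  set g : ℕ → X := fun i =>
    if i < a.length then pa i else pc ((i - a.length) % c.length) with hg
  have hgy : ∀ i, a.length ≤ i → g i = pc ((i - a.length) % c.length) := by
    intro i hi
    simp only [hg]
    rw [if_neg (by omega)]
  have key : ∀ m, (m + 1) % c.length = (m % c.length + 1) % c.length := by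
    intro m
    conv_lhs => rw [show m = c.length * (m / c.length) + m % c.length from
      (Nat.div_add_mod m c.length).symm]
    rw [Nat.add_assoc, Nat.mul_add_mod]
  have hpcy : ∀ m, pc ((m + 1) % c.length) = pc (m % c.length + 1) := by
    intro m
    rw [key m]
    rcases Nat.lt_or_ge (m % c.length + 1) c.length with h | h
    · rw [Nat.mod_eq_of_lt h]
    · have hj : m % c.length + 1 = c.length := by
        have := Nat.mod_lt m hL; omega
      rw [hj, Nat.mod_self, hpc0, hpcl]
  have hInL : M.InLomega f := by
    refine ⟨g, ?_, ?_⟩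
    · rcases Nat.lt_or_ge 0 a.length with h0 | h0
      · have : g 0 = pa 0 := if_pos h0
        rw [this, hpa0]; exact hx0
      · have hae : a = [] := List.length_eq_zero_iff.mp (by omega)
        subst hae
        have hxy : x0 = y := ha
        have : g 0 = pc 0 := by rw [hgy 0 (by simp)]; simp
        rw [this, hpc0, ← hxy]; exact hx0
    · intro i
      rcases Nat.lt_or_ge i a.length with hia | hia
      · have hfa : f i = a[i] := dif_pos hia
        have hga : g i = pa i := if_pos hia
        rw [hfa, hga]
        rcases Nat.lt_or_ge (i + 1) a.length with h1 | h1
        · rw [show g (i + 1) = pa (i + 1) from if_pos h1]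
          exact hpas i hia
        · have he : i + 1 = a.length := by omega
          have hgi1 : g (i + 1) = pc ((i + 1 - a.length) % c.length) := hgy _ (by omega)
          rw [hgi1, he, Nat.sub_self, Nat.zero_mod, hpc0, ← hpal, ← he]
          exact hpas i hia
      · have hfc : f i = c.get ⟨(i - a.length) % c.length, Nat.mod_lt _ hL⟩ :=
          dif_neg (by omega)
        have hgc : g i = pc ((i - a.length) % c.length) := hgy _ hia
        have hgc1 : g (i + 1) = pc ((i + 1 - a.length) % c.length) := hgy _ (by omega)
        have h2 : i + 1 - a.length = (i - a.length) + 1 := by omega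
        rw [hfc, hgc, hgc1, h2, hpcy]
        simpa using hpcs ((i - a.length) % c.length) (Nat.mod_lt _ hL)
  have hpa : IsPrefixOf a f := by
    rintro ⟨i, hi⟩
    show a.get _ = f i
    rw [show f i = a[i] from dif_pos hi]
    simp
  obtain ⟨s'', hlen, hpre, hempty⟩ := H f hInL a hpa
  refine hbad s'' (fun i h => ?_) hempty
  have hi2 : a.length + i < (a ++ s'').length := by simp; omega
  have hp := hpre ⟨a.length + i, hi2⟩
  have hLft : (a ++ s'').get ⟨a.length + i, hi2⟩ = s''[i] := by
    simp [List.getElem_append_right (by omega : a.length ≤ a.length + i)]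
  have hRt : f (a.length + i) = c.get ⟨i % c.length, Nat.mod_lt _ hL⟩ := by
    rw [show f (a.length + i) = _ from dif_neg (by omega : ¬ a.length + i < a.length)]
    congr 1
    exact Fin.ext (by simp)
  rw [hLft, hRt] at hp
  exact hp

end FSA

namespace FSA
variable {X T O : Type}

lemma mod_succ_mod (m L : ℕ) : (m + 1) % L = (m % L + 1) % L := by
  conv_lhs => rw [show m = L * (m / L) + m % L from (Nat.div_add_mod m L).symm]
  rw [Nat.add_assoc, Nat.mul_add_mod]

lemma est_cycle (M : FSA X T O) {n : ℕ} (hn : 0 < n) (q : Fin (n + 1) → Set X)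
    (σf : Fin n → O) (w0 : List O) (hq0 : M.est w0 = q 0)
    (hcyc : q 0 = q (Fin.last n))
    (htrans : ∀ i : Fin n, M.obsTrans (q i.castSucc) (σf i) (q i.succ)) :
    ∀ ρ : List O, (∀ i (h : i < ρ.length), ρ[i] = σf ⟨i % n, Nat.mod_lt _ hn⟩) →
      M.est (w0 ++ ρ) = q ⟨ρ.length % n, Nat.lt_succ_of_lt (Nat.mod_lt _ hn)⟩ := by
  intro ρ
  induction ρ using List.reverseRecOn with
  | nil =>
    intro _
    have h0 : (⟨([] : List O).length % n, Nat.lt_succ_of_lt (Nat.mod_lt _ hn)⟩ : Fin (n + 1))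
        = 0 := Fin.ext (by simp)
    rw [List.append_nil, hq0, h0]
  | append_singleton ρ o ih =>
    intro hget
    have hρ : ∀ i (h : i < ρ.length), ρ[i] = σf ⟨i % n, Nat.mod_lt _ hn⟩ := by
      intro i h
      have h2 := hget i (by simp; omega)
      rwa [List.getElem_append_left h] at h2
    have ihρ := ih hρ
    have ho : o = σf ⟨ρ.length % n, Nat.mod_lt _ hn⟩ := by
      have h2 := hget ρ.length (by simp)
      rw [List.getElem_append_right (le_refl ρ.length)] at h2
      simpa using h2
    have hcs : q (Fin.castSucc (⟨ρ.length % n, Nat.mod_lt _ hn⟩ : Fin n))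
        = q ⟨ρ.length % n, Nat.lt_succ_of_lt (Nat.mod_lt _ hn)⟩ :=
      congrArg q (Fin.ext rfl)
    have hstep := (htrans ⟨ρ.length % n, Nat.mod_lt _ hn⟩).1
    have h3 : M.est (w0 ++ (ρ ++ [o])) = q (Fin.succ ⟨ρ.length % n, Nat.mod_lt _ hn⟩) := by
      rw [← List.append_assoc, M.est_snoc, ihρ, ← hcs, ho, ← hstep]
    rcases Nat.lt_or_ge (ρ.length % n + 1) n with hlt | hge
    · rw [h3]
      apply congrArg q
      apply Fin.ext
      simp only [Fin.val_succ, List.length_append, List.length_singleton]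
      rw [mod_succ_mod, Nat.mod_eq_of_lt hlt]
    · have he : ρ.length % n + 1 = n := by have := Nat.mod_lt ρ.length hn; omega
      have hlast : Fin.succ (⟨ρ.length % n, Nat.mod_lt _ hn⟩ : Fin n) = Fin.last n :=
        Fin.ext (by simp [he])
      have hzero : (⟨(ρ ++ [o]).length % n, Nat.lt_succ_of_lt (Nat.mod_lt _ hn)⟩ :
          Fin (n + 1)) = 0 := by
        apply Fin.ext
        simp only [List.length_append, List.length_singleton]
        rw [mod_succ_mod, he, Nat.mod_self]
        simp
      rw [h3, hlast, ← hcyc, hzero]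

theorem mpr_aux {X T O : Type} [Fintype X] [Fintype T] [Fintype O]
    (M : FSA X T O) (Tspec : Set (X × X)) :
    ((∃ q : Set X, M.ObsReachable q ∧ (q ×ˢ q) ∩ Tspec ≠ ∅ ∧
          ∃ x ∈ q, ∃ (x' : X) (s1 s2 : List T),
            M.UnobsRun x s1 x' ∧ s2 ≠ [] ∧ M.UnobsRun x' s2 x') ∨
       (∃ (n : ℕ), 0 < n ∧ ∃ (q : Fin (n + 1) → Set X) (σ : Fin n → O),
          M.ObsReachable (q 0) ∧ q 0 = q (Fin.last n) ∧
          (∀ i : Fin n, M.obsTrans (q i.castSucc) (σ i) (q i.succ)) ∧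
          ∀ i : Fin (n + 1), (q i ×ˢ q i) ∩ Tspec ≠ ∅)) → ¬ M.SPDD Tspec := by
  rintro (⟨q, ⟨w, hw⟩, hbadq, x, hxq, x', s1, s2, ⟨hr1, hu1⟩, hs2ne, ⟨hr2, hu2⟩⟩ |
          ⟨n, hn, q, σf, ⟨w0, hw0⟩, hcyc, htrans, hbadall⟩)
  · -- case (7)
    have hq : q = M.est w := M.obsRun_obsInit hw
    rw [hq] at hxq
    obtain ⟨xi, hxi, sr, hlr, hrr⟩ := hxq
    refine M.notSPDD_of_loop Tspec xi x' (sr ++ s1) s2 hxi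
      ((M.run_append sr s1 xi x').mpr ⟨x, hrr, hr1⟩) hr2 hs2ne ?_
    intro u hu
    have hlu : M.labelSeq ((sr ++ s1) ++ u) = w := by
      rw [labelSeq_append, labelSeq_append, hlr,
        show M.labelSeq s1 = [] from List.filterMap_eq_nil_iff.mpr hu1,
        show M.labelSeq u = [] from List.filterMap_eq_nil_iff.mpr ?_]
      · simp
      · intro t ht
        obtain ⟨idx, hidx, rfl⟩ := List.mem_iff_getElem.mp ht
        rw [hu idx hidx]
        exact hu2 _ (List.get_mem s2 _)
    rw [hlu, ← hq]
    exact hbadq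
  · -- case (8)
    have hq0 : M.est w0 = q 0 := (M.obsRun_obsInit hw0).symm
    have hq0ne : (q 0).Nonempty := by
      obtain ⟨⟨u, v⟩, huv⟩ := Set.nonempty_iff_ne_empty.mpr (hbadall 0)
      exact ⟨u, (Set.mem_prod.mp huv.1).1⟩
    set cw : List O := List.ofFn σf with hcw
    have hcwlen : cw.length = n := List.length_ofFn
    have hcwne : cw ≠ [] := by
      intro h; rw [h] at hcwlen; simp at hcwlen; omega
    have hEC := M.est_cycle hn q σf w0 hq0 hcyc htrans
    have backstep : ∀ z : {x // x ∈ q 0}, ∃ z' : {x // x ∈ q 0},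
        ∃ s : List T, s ≠ [] ∧ M.labelSeq s = cw ∧ M.Run z'.1 s z.1 := by
      rintro ⟨x, hx⟩
      have h1 : M.est (w0 ++ cw) = q ⟨cw.length % n, Nat.lt_succ_of_lt (Nat.mod_lt _ hn)⟩ := by
        apply hEC
        intro i h
        rw [List.getElem_of_eq hcw h, List.getElem_ofFn]
        apply congrArg σf
        exact Fin.ext (by simp [Nat.mod_eq_of_lt (hcwlen ▸ h)])
      have h2 : M.est (w0 ++ cw) = q 0 := by
        rw [h1]
        apply congrArg q
        exact Fin.ext (by simp [hcwlen])
      have hx2 : x ∈ M.est (w0 ++ cw) := by rw [h2]; exact hx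
      obtain ⟨x0, h0, S, hlS, hrS⟩ := hx2
      obtain ⟨Sa, Sb, rfl, hla, hlb⟩ := M.labelSeq_split hlS
      obtain ⟨y, hya, hyb⟩ := (M.run_append Sa Sb x0 x).mp hrS
      have hy : y ∈ q 0 := by rw [← hq0]; exact ⟨x0, h0, Sa, hla, hya⟩
      refine ⟨⟨y, hy⟩, Sb, ?_, hlb, hyb⟩
      intro hSb
      rw [hSb] at hlb
      exact hcwne (by simpa [labelSeq] using hlb.symm)
    choose F hF using backstep
    obtain ⟨z0, hz0⟩ := hq0ne
    set z : ℕ → {x // x ∈ q 0} := fun m => F^[m] ⟨z0, hz0⟩ with hz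
    have hzstep : ∀ m, ∃ s : List T,
        s ≠ [] ∧ M.labelSeq s = cw ∧ M.Run (z (m + 1)).1 s (z m).1 := by
      intro m
      have he : z (m + 1) = F (z m) := by
        simp [hz, Function.iterate_succ_apply']
      rw [he]
      exact hF (z m)
    have comp : ∀ d m, ∃ s : List T,
        M.labelSeq s = (List.replicate d cw).flatten ∧ M.Run (z (m + d)).1 s (z m).1 ∧
        (0 < d → s ≠ []) := by
      intro d
      induction d with
      | zero => intro m; exact ⟨[], by simp [labelSeq], rfl, by omega⟩
      | succ d ihd =>
        intro m
        obtain ⟨S, hlS, hrS, _⟩ := ihd m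
        obtain ⟨s', hs'ne, hls', hrs'⟩ := hzstep (m + d)
        refine ⟨s' ++ S, ?_, ?_, fun _ => by simp [hs'ne]⟩
        · rw [labelSeq_append, hls', hlS, List.replicate_succ, List.flatten_cons]
        · refine (M.run_append s' S _ _).mpr ⟨(z (m + d)).1, ?_, hrS⟩
          have heq : m + (d + 1) = (m + d) + 1 := by omega
          rw [heq]
          exact hrs'
    obtain ⟨i0, j0, hij, hzeq0⟩ := Fintype.exists_ne_map_eq_of_card_lt
      (fun i : Fin (Fintype.card X + 1) => (z i).1) (by simp)
    obtain ⟨i, j, hlt, hzeq⟩ : ∃ i j : Fin (Fintype.card X + 1),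
        i < j ∧ (z i.1).1 = (z j.1).1 := by
      rcases Ne.lt_or_gt hij with h | h
      · exact ⟨i0, j0, h, hzeq0⟩
      · exact ⟨j0, i0, h, hzeq0.symm⟩
    have hd0 : 0 < j.1 - i.1 := by
      have : i.1 < j.1 := hlt
      omega
    obtain ⟨S, hlS, hrS, hSne⟩ := comp (j.1 - i.1) i.1
    have hidx : i.1 + (j.1 - i.1) = j.1 := by
      have : i.1 < j.1 := hlt
      omega
    rw [hidx, ← hzeq] at hrS
    have hSne' : S ≠ [] := hSne hd0
    have hy : (z i.1).1 ∈ M.est w0 := by rw [hq0]; exact (z i.1).2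
    obtain ⟨x0, h0, aEv, hla, hra⟩ := hy
    refine M.notSPDD_of_loop Tspec x0 (z i.1).1 aEv S h0 hra hrS hSne' ?_
    intro u hu
    have hSlen : 0 < S.length := List.length_pos_iff.mpr hSne'
    have hupre : u <+: (List.replicate u.length S).flatten := by
      rw [List.prefix_iff_eq_take]
      apply List.ext_getElem
      · rw [List.length_take, join_replicate_length]
        rcases Nat.eq_zero_or_pos u.length with h | h
        · simp [h]
        · have := Nat.le_mul_of_pos_right u.length hSlen
          omega
      · intro idx h1 h2
        rw [List.getElem_take, join_replicate_getElem S hSne']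
        exact hu idx h1
    have hlupre : M.labelSeq u <+: (List.replicate (u.length * (j.1 - i.1)) cw).flatten := by
      have h1 : M.labelSeq u <+: M.labelSeq ((List.replicate u.length S).flatten) :=
        List.IsPrefix.filterMap M.label hupre
      have h2 : M.labelSeq ((List.replicate u.length S).flatten)
          = (List.replicate (u.length * (j.1 - i.1)) cw).flatten := by
        show List.filterMap M.label _ = _
        rw [List.filterMap_flatten, List.map_replicate]
        rw [show List.filterMap M.label S = (List.replicate (j.1 - i.1) cw).flatten from hlS]
        exact join_replicate_mul cw u.length (j.1 - i.1)
      rwa [h2] at h1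
    have helem : ∀ idx (h : idx < (M.labelSeq u).length),
        (M.labelSeq u)[idx] = σf ⟨idx % n, Nat.mod_lt _ hn⟩ := by
      intro idx h
      rw [List.IsPrefix.getElem hlupre h, join_replicate_getElem cw hcwne]
      have hb : idx % cw.length < cw.length := Nat.mod_lt _ (List.length_pos_iff.mpr hcwne)
      rw [List.get_eq_getElem, List.getElem_of_eq hcw hb, List.getElem_ofFn]
      apply congrArg σf
      exact Fin.ext (by simp [hcwlen])
    have hfinal := hEC (M.labelSeq u) helem
    rw [labelSeq_append, hla, hfinal]
    exact hbadall _
end FSA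

namespace FSA

theorem mp_aux {X T O : Type} [Fintype X] [Fintype T] [Fintype O]
    (M : FSA X T O) (Tspec : Set (X × X)) (hnot : ¬ M.SPDD Tspec) :
    ((∃ q : Set X, M.ObsReachable q ∧ (q ×ˢ q) ∩ Tspec ≠ ∅ ∧
          ∃ x ∈ q, ∃ (x' : X) (s1 s2 : List T),
            M.UnobsRun x s1 x' ∧ s2 ≠ [] ∧ M.UnobsRun x' s2 x') ∨
       (∃ (n : ℕ), 0 < n ∧ ∃ (q : Fin (n + 1) → Set X) (σ : Fin n → O),
          M.ObsReachable (q 0) ∧ q 0 = q (Fin.last n) ∧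
          (∀ i : Fin n, M.obsTrans (q i.castSucc) (σ i) (q i.succ)) ∧
          ∀ i : Fin (n + 1), (q i ×ˢ q i) ∩ Tspec ≠ ∅)) := by
  classical
  have _inst : Fintype (Set X) := Fintype.ofFinite _
  set K := Fintype.card (Set X) + 1 with hK
  have hK0 : 0 < K := by omega
  -- extract a bad run from ¬SPDD at bound K
  have hH : ∃ s : ℕ → T, M.InLomega s ∧ ∃ s' : List T, IsPrefixOf s' s ∧
      ∀ s'' : List T, (M.labelSeq s'').length < K → IsPrefixOf (s' ++ s'') s →
        (M.est (M.labelSeq (s' ++ s'')) ×ˢ M.est (M.labelSeq (s' ++ s''))) ∩ Tspec ≠ ∅ := by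
    by_contra hcon
    push_neg at hcon
    exact hnot ⟨K, hK0, fun s hs s' hs' => hcon s hs s' hs'⟩
  obtain ⟨s, hInL, s', hps', P⟩ := hH
  obtain ⟨gx, hgx0, hgxd⟩ := hInL
  set L := s'.length with hL
  set seg : ℕ → List T := fun m => List.ofFn (fun i : Fin m => s (L + i)) with hsegdef
  -- basic list facts
  have hseglen : ∀ m, (seg m).length = m := by intro m; simp [hsegdef]
  have hsegsucc : ∀ m, seg (m + 1) = seg m ++ [s (L + m)] := by
    intro m
    apply List.ext_getElem (by simp [hseglen])
    intro idx h1 h2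
    have hidx : idx < m + 1 := by simpa [hseglen] using h1
    rcases Nat.lt_or_ge idx m with h | h
    · rw [List.getElem_append_left (by simpa [hseglen] using h)]
      simp only [hsegdef]
      rw [List.getElem_ofFn, List.getElem_ofFn]
    · have hie : idx = m := by omega
      subst hie
      rw [List.getElem_append_right (le_of_eq (hseglen idx))]
      simp only [hsegdef]
      rw [List.getElem_ofFn]
      simp
  have hrunseg : ∀ a d, M.Run (gx a) (List.ofFn (fun i : Fin d => s (a + i))) (gx (a + d)) := by
    intro a d
    induction d with
    | zero => simp [List.ofFn_zero]; rfl
    | succ d ih =>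
      rw [List.ofFn_succ', List.concat_eq_append]
      refine (M.run_append _ _ _ _).mpr ⟨gx (a + d), ?_, ?_⟩
      · have he : (List.ofFn fun i : Fin d => s (a + ↑(Fin.castSucc i)))
            = List.ofFn fun i : Fin d => s (a + ↑i) := by
          apply List.ext_getElem (by simp)
          intro idx h1 h2
          simp [List.getElem_ofFn]
        rw [he]; exact ih
      · exact ⟨gx (a + d + 1), by simpa using hgxd (a + d), rfl⟩
  -- s' ++ seg m agrees with the run prefix
  have hseq : ∀ m, s' ++ seg m = List.ofFn (fun i : Fin (L + m) => s i) := by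
    intro m
    apply List.ext_getElem (by simp [hseglen, hL])
    intro idx h1 h2
    rcases Nat.lt_or_ge idx s'.length with h | h
    · rw [List.getElem_append_left h]
      have := hps' ⟨idx, h⟩
      rw [List.get_eq_getElem] at this
      rw [this, List.getElem_ofFn]
    · rw [List.getElem_append_right h]
      simp only [hsegdef, List.getElem_ofFn]
      congr 1
      omega
  have hprefix : ∀ m, IsPrefixOf (s' ++ seg m) s := by
    intro m
    rintro ⟨idx, hidx⟩
    rw [List.get_eq_getElem]
    have h2 : idx < (List.ofFn (fun i : Fin (L + m) => s i)).length := by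
      rw [← hseq m]; exact hidx
    rw [List.getElem_of_eq (hseq m) hidx, List.getElem_ofFn]
  set E : ℕ → Set X := fun m => M.est (M.labelSeq (s' ++ seg m)) with hEdef
  set cnt : ℕ → ℕ := fun m => (M.labelSeq (seg m)).length with hcntdef
  have hmem : ∀ m, gx (L + m) ∈ E m := by
    intro m
    refine ⟨gx 0, hgx0, s' ++ seg m, rfl, ?_⟩
    rw [hseq m]
    have he : (List.ofFn fun i : Fin (L + m) => s i)
        = List.ofFn fun i : Fin (L + m) => s (0 + ↑i) := by
      apply List.ext_getElem (by simp)
      intro idx h1 h2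
      simp [List.getElem_ofFn]
    rw [he]
    have h0 : gx (L + m) = gx (0 + (L + m)) := by norm_num
    rw [h0, show gx 0 = gx 0 from rfl]
    exact hrunseg 0 (L + m)
  have hEne : ∀ m, (E m).Nonempty := fun m => ⟨gx (L + m), hmem m⟩
  have hcnt0 : cnt 0 = 0 := by simp [hcntdef, hsegdef, labelSeq]
  have hstep : ∀ m,
      (M.label (s (L + m)) = none ∧ M.labelSeq (seg (m + 1)) = M.labelSeq (seg m))
      ∨ ∃ o, M.label (s (L + m)) = some o ∧
          M.labelSeq (seg (m + 1)) = M.labelSeq (seg m) ++ [o] := by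
    intro m
    rw [hsegsucc m, labelSeq_append]
    cases hlm : M.label (s (L + m)) with
    | none =>
      left
      refine ⟨rfl, ?_⟩
      rw [show M.labelSeq [s (L + m)] = [] from by simp [labelSeq, List.filterMap_cons, hlm]]
      simp
    | some o =>
      right
      refine ⟨o, rfl, ?_⟩
      rw [show M.labelSeq [s (L + m)] = [o] from by simp [labelSeq, List.filterMap_cons, hlm]]
  have hcnt_succ : ∀ m, cnt (m + 1) = cnt m ∨ cnt (m + 1) = cnt m + 1 := by
    intro m
    rcases hstep m with ⟨_, h⟩ | ⟨o, _, h⟩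
    · left; simp [hcntdef, h]
    · right; simp [hcntdef, h]
  have hcnt_mono : ∀ m d, cnt m ≤ cnt (m + d) := by
    intro m d
    induction d with
    | zero => exact le_refl _
    | succ d ih =>
      rcases hcnt_succ (m + d) with h | h
      · rw [show m + (d+1) = (m+d)+1 from rfl, h]; exact ih
      · rw [show m + (d+1) = (m+d)+1 from rfl, h]; omega
  have hcnt_some : ∀ m o, M.label (s (L + m)) = some o → cnt (m + 1) = cnt m + 1 := by
    intro m o ho
    rcases hstep m with ⟨h1, _⟩ | ⟨o', _, h⟩
    · rw [ho] at h1; cases h1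
    · simp [hcntdef, h]
  have hE_none : ∀ m, M.label (s (L + m)) = none → E (m + 1) = E m := by
    intro m hm
    rcases hstep m with ⟨_, h⟩ | ⟨o, ho, _⟩
    · simp only [hEdef]
      rw [labelSeq_append, labelSeq_append, h]
    · rw [hm] at ho; cases ho
  have hE_some : ∀ m o, M.label (s (L + m)) = some o → M.obsTrans (E m) o (E (m + 1)) := by
    intro m o hm
    rcases hstep m with ⟨h1, _⟩ | ⟨o', ho', h⟩
    · rw [hm] at h1; cases h1
    · rw [hm] at ho'
      injection ho' with ho'
      subst ho'
      constructor
      · show M.est (M.labelSeq (s' ++ seg (m + 1)))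
            = M.UR (M.ReachO o (M.est (M.labelSeq (s' ++ seg m))))
        rw [M.labelSeq_append s' (seg (m + 1)), h, ← List.append_assoc, est_snoc,
          M.labelSeq_append s' (seg m)]
      · exact hEne (m + 1)
  have hE_plateau : ∀ m d, cnt (m + d) = cnt m → E (m + d) = E m := by
    intro m d
    induction d with
    | zero => intro _; rfl
    | succ d ih =>
      intro hc
      have h1 : cnt m ≤ cnt (m + d) := hcnt_mono m d
      have h2 : cnt (m + d) ≤ cnt (m + d + 1) := hcnt_mono (m + d) 1
      have h3 : cnt (m + d + 1) = cnt m := hc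
      have hcd : cnt (m + d) = cnt m := by omega
      rw [show m + (d+1) = (m+d)+1 from rfl] at hc
      cases hlm : M.label (s (L + (m + d))) with
      | none =>
        rw [show m + (d+1) = (m+d)+1 from rfl, hE_none (m + d) hlm, ih hcd]
      | some o =>
        have := hcnt_some (m + d) o hlm
        omega
  by_cases hB : ∃ m, K - 1 ≤ cnt m
  · -- enough observable events: build an observer cycle
    right
    obtain ⟨mstar, hmstar⟩ := hB
    have hIVT : ∀ j, j ≤ K - 1 → ∃ m, cnt m = j := by
      intro j hj
      induction j with
      | zero => exact ⟨0, hcnt0⟩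
      | succ j ihj =>
        have hex : ∃ m', j + 1 ≤ cnt m' := ⟨mstar, by omega⟩
        have h1 : j + 1 ≤ cnt (Nat.find hex) := Nat.find_spec hex
        have hm'0 : Nat.find hex ≠ 0 := by
          intro h; rw [h, hcnt0] at h1; omega
        obtain ⟨m'', hm''⟩ : ∃ k, Nat.find hex = k + 1 := ⟨Nat.find hex - 1, by omega⟩
        have h2 : ¬ (j + 1 ≤ cnt m'') := Nat.find_min hex (by omega)
        have h3 := hcnt_succ m''
        rw [hm''] at h1
        exact ⟨m'' + 1, by omega⟩
    have hexists : ∀ j : Fin K, ∃ m, cnt m = j.1 := by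
      intro j
      exact hIVT j.1 (by have := j.2; omega)
    set mj : Fin K → ℕ := fun j => Nat.find (hexists j) with hmjdef
    have hmj : ∀ j, cnt (mj j) = j.1 := fun j => Nat.find_spec (hexists j)
    have hmjmin : ∀ (j : Fin K) m, cnt m = j.1 → mj j ≤ m := fun j m h =>
      Nat.find_min' (hexists j) h
    -- one observer step between consecutive levels
    have htransE : ∀ (a b : Fin K), a.1 + 1 = b.1 → ∃ o, M.obsTrans (E (mj a)) o (E (mj b)) := by
      intro a b hab
      have hb0 : mj b ≠ 0 := by
        intro h
        have := hmj b
        rw [h, hcnt0] at this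
        omega
      obtain ⟨m'', hm''⟩ : ∃ k, mj b = k + 1 := ⟨mj b - 1, by omega⟩
      have hc1 : cnt (m'' + 1) = b.1 := by rw [← hm'']; exact hmj b
      have hcle := hcnt_succ m''
      have hmlt : ¬ (cnt m'' = b.1) := by
        intro h
        have := hmjmin b m'' h
        omega
      have hca : cnt m'' = a.1 := by omega
      have hle : mj a ≤ m'' := hmjmin a m'' hca
      have hplat : E m'' = E (mj a) := by
        have := hE_plateau (mj a) (m'' - mj a) (by
          rw [show mj a + (m'' - mj a) = m'' from by omega, hca, hmj a])
        rwa [show mj a + (m'' - mj a) = m'' from by omega] at this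
      cases hlm : M.label (s (L + m'')) with
      | none =>
        have := hE_none m'' hlm
        have hcc : cnt (m'' + 1) = cnt m'' := by
          rcases hstep m'' with ⟨_, h⟩ | ⟨o, ho, _⟩
          · simp [hcntdef, h]
          · rw [hlm] at ho; cases ho
        omega
      | some o =>
        refine ⟨o, ?_⟩
        rw [hm'', ← hplat]
        exact hE_some m'' o hlm
    -- pigeonhole on the estimates
    obtain ⟨a0, b0, hab0, hEeq0⟩ := Fintype.exists_ne_map_eq_of_card_lt
      (fun j : Fin K => E (mj j)) (by simp [hK])
    obtain ⟨a, b, hab, hEeq⟩ : ∃ a b : Fin K, a < b ∧ E (mj a) = E (mj b) := by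
      rcases Ne.lt_or_gt hab0 with h | h
      · exact ⟨a0, b0, h, hEeq0⟩
      · exact ⟨b0, a0, h, hEeq0.symm⟩
    set n := b.1 - a.1 with hn
    have hn0 : 0 < n := by
      have : a.1 < b.1 := hab
      omega
    have hib : ∀ i : Fin (n + 1), a.1 + i.1 < K := by
      intro i
      have h1 := i.2
      have h2 := b.2
      omega
    set q : Fin (n + 1) → Set X := fun i => E (mj ⟨a.1 + i.1, hib i⟩) with hqdef
    have hqe : ∀ (i : Fin (n + 1)) (j : Fin K), a.1 + i.1 = j.1 → q i = E (mj j) :=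
      fun i j hj => congrArg (fun jj : Fin K => E (mj jj)) (Fin.ext hj)
    choose σo hσo using fun i : Fin n =>
      htransE ⟨a.1 + i.1, by have := i.2; have := b.2; omega⟩
        ⟨a.1 + i.1 + 1, by have := i.2; have := b.2; omega⟩ rfl
    refine ⟨n, hn0, q, σo, ?_, ?_, ?_, ?_⟩
    · -- reachable
      refine ⟨M.labelSeq (s' ++ seg (mj ⟨a.1 + 0, hib 0⟩)), ?_⟩
      have := M.est_nonempty_obsRun (M.labelSeq (s' ++ seg (mj ⟨a.1 + (0 : Fin (n+1)).1, hib 0⟩)))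
        (hEne _)
      exact this
    · -- q 0 = q last
      rw [hqe 0 a (by simp), hqe (Fin.last n) b (by simp [Fin.val_last, hn]; omega)]
      exact hEeq
    · -- transitions
      intro i
      have h1 : q i.castSucc = E (mj ⟨a.1 + i.1, _⟩) := hqe i.castSucc
        ⟨a.1 + i.1, by have := i.2; have := b.2; omega⟩ (by simp)
      have h2 : q i.succ = E (mj ⟨a.1 + i.1 + 1, _⟩) := hqe i.succ
        ⟨a.1 + i.1 + 1, by have := i.2; have := b.2; omega⟩ (by simp [Fin.val_succ]; omega)
      rw [h1, h2]
      exact hσo i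
    · -- badness
      intro i
      have h1 : q i = E (mj ⟨a.1 + i.1, hib i⟩) := rfl
      rw [h1]
      apply P
      · show (M.labelSeq (seg _)).length < K
        have := hmj ⟨a.1 + i.1, hib i⟩
        have h2 := (hib i)
        show cnt _ < K
        omega
      · exact hprefix _
  · -- few observable events: find an unobservable cycle
    left
    push_neg at hB
    have hBa : ∀ m, cnt m < K - 1 := fun m => hB m
    -- eventually all unobservable
    have hN : ∃ N, ∀ i, N ≤ i → M.label (s (L + i)) = none := by
      by_contra hcon
      push_neg at hcon
      have grow : ∀ j, ∃ m, j ≤ cnt m := by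
        intro j
        induction j with
        | zero => exact ⟨0, by omega⟩
        | succ j ihj =>
          obtain ⟨m, hm⟩ := ihj
          obtain ⟨i, hi, hlab⟩ := hcon m
          obtain ⟨o, ho⟩ := Option.ne_none_iff_exists'.mp hlab
          have h1 : cnt (i + 1) = cnt i + 1 := hcnt_some i o ho
          have h2 : cnt m ≤ cnt i := by
            have := hcnt_mono m (i - m)
            rwa [show m + (i - m) = i from by omega] at this
          exact ⟨i + 1, by omega⟩
      obtain ⟨m, hm⟩ := grow (K - 1)
      exact absurd hm (by have := hBa m; omega)
    obtain ⟨N, hN⟩ := hN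
    -- pigeonhole on states
    obtain ⟨t0, t1, htne, hteq⟩ := Fintype.exists_ne_map_eq_of_card_lt
      (fun t : Fin (Fintype.card X + 1) => gx (L + N + t.1)) (by simp)
    obtain ⟨ta, tb, htlt, hteq2⟩ : ∃ ta tb : Fin (Fintype.card X + 1),
        ta < tb ∧ gx (L + N + ta.1) = gx (L + N + tb.1) := by
      rcases Ne.lt_or_gt htne with h | h
      · exact ⟨t0, t1, h, hteq⟩
      · exact ⟨t1, t0, h, hteq.symm⟩
    refine ⟨E (N + ta.1), ?_, ?_, gx (L + (N + ta.1)), hmem (N + ta.1),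
      gx (L + (N + ta.1)), [], List.ofFn (fun i : Fin (tb.1 - ta.1) => s (L + (N + ta.1) + i.1)),
      ⟨rfl, by simp⟩, ?_, ?_, ?_⟩
    · exact ⟨M.labelSeq (s' ++ seg (N + ta.1)), M.est_nonempty_obsRun _ (hEne _)⟩
    · apply P
      · show cnt (N + ta.1) < K
        have := hBa (N + ta.1)
        omega
      · exact hprefix _
    · -- s2 nonempty
      intro h
      have := congrArg List.length h
      simp at this
      have : ta.1 < tb.1 := htlt
      omega
    · -- Run component of UnobsRun x' s2 x'
      have hrr := hrunseg (L + (N + ta.1)) (tb.1 - ta.1)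
      rwa [show L + (N + ta.1) + (tb.1 - ta.1) = L + N + tb.1 from by
          have h9 : ta.1 < tb.1 := htlt
          omega,
        show gx (L + N + tb.1) = gx (L + (N + ta.1)) from by
          rw [← hteq2]; congr 1; omega] at hrr
    · -- labels of s2 are none
      intro t ht
      obtain ⟨idx, hidx, rfl⟩ := List.mem_iff_getElem.mp ht
      rw [List.getElem_ofFn]
      show M.label (s (L + (N + ta.1) + idx)) = none
      rw [show L + (N + ta.1) + idx = L + (N + ta.1 + idx) from by omega]
      exact hN _ (by omega)
end FSA


/-- `S` is not strongly periodically D-detectable w.r.t. `Tspec` iff in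
its observer `S_obs`: (7) there are a reachable state `q` and `x ∈ q` with
`(q × q) ∩ Tspec ≠ ∅` and a transition sequence `x →^{s1} x' →^{s2} x'` in `S` with
`s1 ∈ (T_uo)*`, `s2 ∈ (T_uo)^+`; or (8) there is a reachable transition cycle of
`S_obs` every state `q` of which satisfies `(q × q) ∩ Tspec ≠ ∅`. -/
theorem not_spdd_iff_observer {X T O : Type} [Fintype X] [Fintype T] [Fintype O]
    (M : FSA X T O) (Tspec : Set (X × X)) :
    ¬ M.SPDD Tspec ↔
      ((∃ q : Set X, M.ObsReachable q ∧ (q ×ˢ q) ∩ Tspec ≠ ∅ ∧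
          ∃ x ∈ q, ∃ (x' : X) (s1 s2 : List T),
            M.UnobsRun x s1 x' ∧ s2 ≠ [] ∧ M.UnobsRun x' s2 x') ∨
       (∃ (n : ℕ), 0 < n ∧ ∃ (q : Fin (n + 1) → Set X) (σ : Fin n → O),
          M.ObsReachable (q 0) ∧ q 0 = q (Fin.last n) ∧
          (∀ i : Fin n, M.obsTrans (q i.castSucc) (σ i) (q i.succ)) ∧
          ∀ i : Fin (n + 1), (q i ×ˢ q i) ∩ Tspec ≠ ∅)) := by
  exact ⟨fun h => FSA.mp_aux M Tspec h, fun h => FSA.mpr_aux M Tspec h⟩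
end

section
/- Let S be an FSA with detector S_det and ε-extended self-composition CC^ε_A(S). The following are equivalent: (i) CC^ε_A(S) has a reachable state (x,x̄) with x≠x̄ such that there is a transition sequence x→^{s1}x'→^{s2}x' in S for some s1∈(T_uo)*, s2∈(T_uo)^+, x'∈X; (ii) there are a reachable state q' of S_det and x∈q' such that |q'|>1 and there is a transition sequence x→^{s1}x'→^{s2}x' in S for some s1∈(T_uo)*, s2∈(T_uo)^+, x'∈X. -/
namespace FSA

variable {X T O : Type}

lemma run_append_s18 {M : FSA X T O} :
    ∀ {s : List T} {a b : X} (s' : List T) (c : X),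
      M.Run a s b → M.Run b s' c → M.Run a (s ++ s') c := by
  intro s
  induction s with
  | nil => intro a b s' c h h'; cases h; exact h'
  | cons t s ih =>
    intro a b s' c h h'
    obtain ⟨y, hy, hr⟩ := h
    exact ⟨y, hy, ih s' c hr h'⟩

lemma unobsRun_append {M : FSA X T O} {s s' : List T} {a b c : X}
    (h : M.UnobsRun a s b) (h' : M.UnobsRun b s' c) : M.UnobsRun a (s ++ s') c := by
  refine ⟨run_append_s18 s' c h.1 h'.1, ?_⟩
  intro t ht
  rcases List.mem_append.1 ht with ht | ht
  · exact h.2 t ht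
  · exact h'.2 t ht

lemma labelSeq_cons_none {M : FSA X T O} {t : T} (s : List T) (h : M.label t = none) :
    M.labelSeq (t :: s) = M.labelSeq s := by
  simp [labelSeq, List.filterMap_cons, h]

lemma labelSeq_cons_some {M : FSA X T O} {t : T} {σ : O} (s : List T)
    (h : M.label t = some σ) : M.labelSeq (t :: s) = σ :: M.labelSeq s := by
  simp [labelSeq, List.filterMap_cons, h]

lemma labelSeq_eq_nil {M : FSA X T O} {s : List T} (h : M.labelSeq s = []) :
    ∀ t ∈ s, M.label t = none := by
  induction s with
  | nil => intro t ht; simp at ht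
  | cons t s ih =>
    intro t' ht'
    rcases List.mem_cons.1 ht' with rfl | ht'
    · cases hl : M.label t' with
      | none => rfl
      | some σ => rw [labelSeq_cons_some s hl] at h; simp at h
    · cases hl : M.label t with
      | none => rw [labelSeq_cons_none s hl] at h; exact ih h t' ht'
      | some σ => rw [labelSeq_cons_some s hl] at h; simp at h

/-- Decomposition of a run whose label sequence starts with an observable event. -/
lemma run_decomp {M : FSA X T O} :
    ∀ (s : List T) (a x : X) (σ : O) (w : List O),
      M.Run a s x → M.labelSeq s = σ :: w →
      ∃ (u : List T) (t : T) (s' : List T) (b c : X),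
        M.UnobsRun a u b ∧ M.label t = some σ ∧ M.delta b t c ∧
        M.Run c s' x ∧ M.labelSeq s' = w := by
  intro s
  induction s with
  | nil =>
    intro a x σ w _ hl
    simp [labelSeq, List.filterMap] at hl
  | cons e s ih =>
    intro a x σ w hr hl
    obtain ⟨y, hy, hr'⟩ := hr
    cases he : M.label e with
    | none =>
      rw [labelSeq_cons_none s he] at hl
      obtain ⟨u, t, s', b, c, hu, ht, hd, hrun, hls⟩ := ih y x σ w hr' hl
      refine ⟨e :: u, t, s', b, c, ⟨⟨y, hy, hu.1⟩, ?_⟩, ht, hd, hrun, hls⟩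
      intro t' ht'
      rcases List.mem_cons.1 ht' with rfl | ht'
      · exact he
      · exact hu.2 t' ht'
    | some σ0 =>
      rw [labelSeq_cons_some s he] at hl
      obtain ⟨rfl, rfl⟩ : σ0 = σ ∧ M.labelSeq s = w := by
        injection hl with h1 h2; exact ⟨h1, h2⟩
      exact ⟨[], e, s, a, y, ⟨rfl, by simp⟩, he, hy, hr', rfl⟩

/-- Two runs with the same labels starting from the same observer estimate. -/
def Twin (M : FSA X T O) (p : X × X) : Prop :=
  ∃ (x0 x0' : X) (s s' : List T), x0 ∈ M.init ∧ x0' ∈ M.init ∧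
    M.Run x0 s p.1 ∧ M.Run x0' s' p.2 ∧ M.labelSeq s = M.labelSeq s'

lemma twin_step {M : FSA X T O} {p r : X × X} {e : CEvent T}
    (hp : M.Twin p) (h : M.ccEpsTrans p e r) : M.Twin r := by
  obtain ⟨x0, x0', s, s', h0, h0', hr, hr', hl⟩ := hp
  rcases h with h | ⟨_, _, hor, _⟩
  · cases e with
    | both t t' =>
      obtain ⟨h1, h2, σ, ht, ht'⟩ := h
      refine ⟨x0, x0', s ++ [t], s' ++ [t'], h0, h0',
        run_append_s18 [t] r.1 hr ⟨r.1, h1, rfl⟩,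
        run_append_s18 [t'] r.2 hr' ⟨r.2, h2, rfl⟩, ?_⟩
      simp [labelSeq, List.filterMap_append, List.filterMap_cons, ht, ht']
      simpa [labelSeq] using hl
    | left t =>
      obtain ⟨h1, h2, h3⟩ := h
      refine ⟨x0, x0', s ++ [t], s', h0, h0',
        run_append_s18 [t] r.1 hr ⟨r.1, h1, rfl⟩, h3 ▸ hr', ?_⟩
      simpa [labelSeq, List.filterMap_append, List.filterMap_cons, h2] using hl
    | right t =>
      obtain ⟨h1, h2, h3⟩ := h
      refine ⟨x0, x0', s, s' ++ [t], h0, h0',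
        h1 ▸ hr, run_append_s18 [t] r.2 hr' ⟨r.2, h3, rfl⟩, ?_⟩
      simpa [labelSeq, List.filterMap_append, List.filterMap_cons, h2] using hl
    | eps => exact absurd h (by simp [ccTrans])
  · rcases hor with rfl | rfl
    · exact ⟨x0, x0, s, s, h0, h0, hr, hr, rfl⟩
    · exact ⟨x0', x0', s', s', h0', h0', hr', hr', rfl⟩

lemma ccrun_twin {M : FSA X T O} :
    ∀ (cs : List (CEvent T)) (p0 p : X × X), M.Twin p0 → M.CCRun p0 cs p → M.Twin p := by
  intro cs
  induction cs with
  | nil => intro p0 p h hr; cases hr; exact h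
  | cons e cs ih =>
    intro p0 p h hr
    obtain ⟨r, he, hr'⟩ := hr
    exact ih r p (twin_step h he) hr'

lemma ccrun_right {M : FSA X T O} :
    ∀ (s' : List T) (b xb : X) (a : X), M.Run b s' xb → (∀ t ∈ s', M.label t = none) →
      M.CCRun (a, b) (s'.map CEvent.right) (a, xb) := by
  intro s'
  induction s' with
  | nil => intro b xb a h _; cases h; rfl
  | cons t s ih =>
    intro b xb a h hn
    obtain ⟨y, hy, hr⟩ := h
    exact ⟨(a, y), Or.inl ⟨rfl, hn t (List.mem_cons_self (a := t) (l := s)), hy⟩,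
      ih y xb a hr fun t' ht' => hn t' (List.mem_cons_of_mem t ht')⟩

lemma ccrun_append {M : FSA X T O} :
    ∀ {cs : List (CEvent T)} {p r : X × X} {cs' : List (CEvent T)} {p' : X × X},
      M.CCRun p cs r → M.CCRun r cs' p' → M.CCRun p (cs ++ cs') p' := by
  intro cs
  induction cs with
  | nil => intro p r cs' p' h h'; cases h; exact h'
  | cons e cs ih =>
    intro p r cs' p' h h'
    obtain ⟨z, hz, hr⟩ := h
    exact ⟨z, hz, ih hr h'⟩

/-- Two runs with equal label sequences can be synchronized in the self-composition. -/
lemma twin_ccrun {M : FSA X T O} :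
    ∀ (s : List T) (s' : List T) (a b x xb : X),
      M.labelSeq s = M.labelSeq s' → M.Run a s x → M.Run b s' xb →
      ∃ cs, M.CCRun (a, b) cs (x, xb) := by
  intro s
  induction s with
  | nil =>
    intro s' a b x xb hl hr hr'
    cases hr
    exact ⟨s'.map CEvent.right, ccrun_right s' b xb a hr' (labelSeq_eq_nil hl.symm)⟩
  | cons t s ih =>
    intro s' a b x xb hl hr hr'
    obtain ⟨y, hy, hr2⟩ := hr
    cases ht : M.label t with
    | none =>
      rw [labelSeq_cons_none s ht] at hl
      obtain ⟨cs, hcs⟩ := ih s' y b x xb hl hr2 hr'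
      exact ⟨CEvent.left t :: cs, (y, b), Or.inl ⟨hy, ht, rfl⟩, hcs⟩
    | some σ =>
      rw [labelSeq_cons_some s ht] at hl
      obtain ⟨u, t', s1, b1, c1, hu, ht', hd1, hr1, hl1⟩ :=
        run_decomp s' b xb σ (M.labelSeq s) hr' hl.symm
      obtain ⟨cs, hcs⟩ := ih s1 y c1 x xb hl1.symm hr2 hr1
      refine ⟨u.map CEvent.right ++ (CEvent.both t t' :: cs), ?_⟩
      exact ccrun_append (ccrun_right u b b1 a hu.1 hu.2)
        ⟨(y, c1), Or.inl ⟨hy, hd1, σ, ht, ht'⟩, hcs⟩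

lemma detrun_snoc {M : FSA X T O} :
    ∀ (w : List O) (q0 q q' : Set X) (σ : O),
      M.DetRun q0 w q → M.detTrans q σ q' → M.DetRun q0 (w ++ [σ]) q' := by
  intro w
  induction w with
  | nil => intro q0 q q' σ h ht; cases h; exact ⟨q', ht, rfl⟩
  | cons σ0 w ih =>
    intro q0 q q' σ h ht
    obtain ⟨q1, h1, h2⟩ := h
    exact ⟨q1, h1, ih q1 q q' σ h2 ht⟩

/-- Every element of a reachable detector state is reachable by a run with the
corresponding label sequence. -/
lemma detrun_est {M : FSA X T O} :
    ∀ (w : List O) (q0 q' : Set X) (v : List O),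
      M.DetRun q0 w q' →
      (∀ y ∈ q0, ∃ x0 ∈ M.init, ∃ s : List T, M.labelSeq s = v ∧ M.Run x0 s y) →
      ∀ x ∈ q', ∃ x0 ∈ M.init, ∃ s : List T, M.labelSeq s = v ++ w ∧ M.Run x0 s x := by
  intro w
  induction w with
  | nil =>
    intro q0 q' v h hP x hx
    cases h
    simpa using hP x hx
  | cons σ w ih =>
    intro q0 q' v h hP x hx
    obtain ⟨q1, h1, h2⟩ := h
    have hsub : q1 ⊆ M.UR (M.ReachO σ q0) := by
      rcases h1 with ⟨_, hs, _⟩ | ⟨_, rfl⟩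
      · exact hs
      · exact fun z hz => hz
    have hP1 : ∀ y ∈ q1, ∃ x0 ∈ M.init, ∃ s : List T,
        M.labelSeq s = v ++ [σ] ∧ M.Run x0 s y := by
      intro y hy
      obtain ⟨z, hz, uu, huu⟩ := hsub hy
      obtain ⟨b, hb, t, hd, hlt⟩ := hz
      obtain ⟨x0, h0, s, hls, hrs⟩ := hP b hb
      refine ⟨x0, h0, s ++ t :: uu, ?_, run_append_s18 (t :: uu) y hrs ⟨z, hd, huu.1⟩⟩
      rw [labelSeq, List.filterMap_append, List.filterMap_cons, hlt]
      have : List.filterMap M.label uu = [] := by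
        rw [List.filterMap_eq_nil_iff]; exact huu.2
      rw [this, ← labelSeq, hls]
    have := ih q1 q' (v ++ [σ]) h2 hP1 x hx
    simpa using this

/-- Choosing a detector successor containing two given states of the observable reach. -/
lemma det_step_choose {M : FSA X T O} [Fintype X] (q : Set X) (σ : O) (b bbb : X)
    (hb : b ∈ M.UR (M.ReachO σ q)) (hb' : bbb ∈ M.UR (M.ReachO σ q)) :
    ∃ q₁, M.detTrans q σ q₁ ∧ b ∈ q₁ ∧ bbb ∈ q₁ := by
  set U := M.UR (M.ReachO σ q) with hU
  by_cases h : 1 < U.ncard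
  · by_cases hbb : b = bbb
    · obtain ⟨z, hz, hzb⟩ := Set.exists_ne_of_one_lt_ncard h b
      refine ⟨{b, z}, Or.inl ⟨h, ?_, Set.ncard_pair (Ne.symm hzb)⟩, by simp, by simp [← hbb]⟩
      intro w hw
      rcases hw with rfl | rfl
      · exact hb
      · exact hz
    · refine ⟨{b, bbb}, Or.inl ⟨h, ?_, Set.ncard_pair hbb⟩, by simp, by simp⟩
      intro w hw
      rcases hw with rfl | rfl
      · exact hb
      · exact hb'
  · have hfin : U.Finite := Set.toFinite U
    have hpos : 0 < U.ncard := (Set.ncard_pos hfin).mpr ⟨b, hb⟩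
    have h1 : U.ncard = 1 := by omega
    refine ⟨U, Or.inr ⟨h1, rfl⟩, hb, hb'⟩

lemma pair_subset_lt {X : Type} [Fintype X] {U : Set X} {x xb : X}
    (hx : x ∈ U) (hx' : xb ∈ U) (hne : x ≠ xb) : 1 < U.ncard := by
  have hsub : ({x, xb} : Set X) ⊆ U := by
    intro w hw; rcases hw with rfl | rfl; exacts [hx, hx']
  have := Set.ncard_le_ncard hsub (Set.toFinite U)
  rw [Set.ncard_pair hne] at this
  omega

/-- Main induction: synchronized runs whose next event is observable lead to a
reachable detector state of cardinality `> 1` containing the end state. -/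
lemma det_aux {M : FSA X T O} [Fintype X] {x xb : X} (hne : x ≠ xb) :
    ∀ (w : List O) (σ : O) (t tb : T) (s sb : List T) (b bbb c cb : X) (q : Set X),
      M.label t = some σ → M.label tb = some σ → M.delta b t c → M.delta bbb tb cb →
      M.Run c s x → M.Run cb sb xb → M.labelSeq s = w → M.labelSeq sb = w →
      M.DetReachable q → b ∈ q → bbb ∈ q →
      ∃ q', M.DetReachable q' ∧ 1 < q'.ncard ∧ x ∈ q' := by
  intro w
  induction w with
  | nil =>
    intro σ t tb s sb b bbb c cb q ht ht' hd hd' hr hr' hl hl' hq hbq hbq'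
    have hx : x ∈ M.UR (M.ReachO σ q) :=
      ⟨c, ⟨b, hbq, t, hd, ht⟩, s, hr, labelSeq_eq_nil hl⟩
    have hx' : xb ∈ M.UR (M.ReachO σ q) :=
      ⟨cb, ⟨bbb, hbq', tb, hd', ht'⟩, sb, hr', labelSeq_eq_nil hl'⟩
    have hcard : 1 < (M.UR (M.ReachO σ q)).ncard := pair_subset_lt hx hx' hne
    have hdet : M.detTrans q σ {x, xb} := by
      refine Or.inl ⟨hcard, ?_, Set.ncard_pair hne⟩
      intro w hw; rcases hw with rfl | rfl; exacts [hx, hx']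
    obtain ⟨w0, hw0⟩ := hq
    exact ⟨{x, xb}, ⟨w0 ++ [σ], detrun_snoc w0 _ q _ σ hw0 hdet⟩,
      by rw [Set.ncard_pair hne]; omega, by simp⟩
  | cons σ' w'' ih =>
    intro σ t tb s sb b bbb c cb q ht ht' hd hd' hr hr' hl hl' hq hbq hbq'
    obtain ⟨u, t1, s'', b1, c1, hu, ht1, hd1, hr1, hl1⟩ := run_decomp s c x σ' w'' hr hl
    obtain ⟨ub, t2, sb'', b2, c2, hub, ht2, hd2, hr2, hl2⟩ := run_decomp sb cb xb σ' w'' hr' hl'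
    have hb1 : b1 ∈ M.UR (M.ReachO σ q) := ⟨c, ⟨b, hbq, t, hd, ht⟩, u, hu⟩
    have hb2 : b2 ∈ M.UR (M.ReachO σ q) := ⟨cb, ⟨bbb, hbq', tb, hd', ht'⟩, ub, hub⟩
    obtain ⟨q₁, hqt, hm1, hm2⟩ := det_step_choose q σ b1 b2 hb1 hb2
    obtain ⟨w0, hw0⟩ := hq
    have hq1 : M.DetReachable q₁ := ⟨w0 ++ [σ], detrun_snoc w0 _ q q₁ σ hw0 hqt⟩
    exact ih σ' t1 t2 s'' sb'' b1 b2 c1 c2 q₁ ht1 ht2 hd1 hd2 hr1 hr2 hl1 hl2 hq1 hm1 hm2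

/-- From two runs with equal labels ending in distinct states, a reachable detector
state of cardinality `> 1` containing the first end state exists. -/
lemma twin_det {M : FSA X T O} [Fintype X] {x xb : X} (hne : x ≠ xb)
    {x0 x0' : X} {s sb : List T} (h0 : x0 ∈ M.init) (h0' : x0' ∈ M.init)
    (hr : M.Run x0 s x) (hr' : M.Run x0' sb xb) (hl : M.labelSeq s = M.labelSeq sb) :
    ∃ q', M.DetReachable q' ∧ 1 < q'.ncard ∧ x ∈ q' := by
  cases hw : M.labelSeq s with
  | nil =>
    have hw' : M.labelSeq sb = [] := by rw [← hl, hw]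
    have hx : x ∈ M.obsInit := ⟨x0, h0, s, hr, labelSeq_eq_nil hw⟩
    have hx' : xb ∈ M.obsInit := ⟨x0', h0', sb, hr', labelSeq_eq_nil hw'⟩
    exact ⟨M.obsInit, ⟨[], rfl⟩, pair_subset_lt hx hx' hne, hx⟩
  | cons σ w' =>
    have hw' : M.labelSeq sb = σ :: w' := by rw [← hl, hw]
    obtain ⟨u, t1, s'', b1, c1, hu, ht1, hd1, hr1, hl1⟩ := run_decomp s x0 x σ w' hr hw
    obtain ⟨ub, t2, sb'', b2, c2, hub, ht2, hd2, hr2, hl2⟩ := run_decomp sb x0' xb σ w' hr' hw'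
    have hb1 : b1 ∈ M.obsInit := ⟨x0, h0, u, hu⟩
    have hb2 : b2 ∈ M.obsInit := ⟨x0', h0', ub, hub⟩
    exact det_aux hne w' σ t1 t2 s'' sb'' b1 b2 c1 c2 M.obsInit
      ht1 ht2 hd1 hd2 hr1 hr2 hl1 hl2 ⟨[], rfl⟩ hb1 hb2

end FSA

/-- `CC^ε_A(S)` has a reachable state `(x,xb)` with `x ≠ xb` from whose
left component a reachable unobservable transition cycle starts iff the detector has
a reachable state `q'` with `|q'| > 1` containing such a state `x`. -/
theorem cc_iff_detector_unobs_cycle {X T O : Type} [Fintype X] [Fintype T] [Fintype O]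
    (M : FSA X T O) :
    (∃ p : X × X, M.CCReachable p ∧ p.1 ≠ p.2 ∧
        ∃ (x' : X) (s1 s2 : List T),
          M.UnobsRun p.1 s1 x' ∧ s2 ≠ [] ∧ M.UnobsRun x' s2 x') ↔
    (∃ q' : Set X, M.DetReachable q' ∧ 1 < q'.ncard ∧
        ∃ x ∈ q', ∃ (x' : X) (s1 s2 : List T),
          M.UnobsRun x s1 x' ∧ s2 ≠ [] ∧ M.UnobsRun x' s2 x') := by
  constructor
  · rintro ⟨p, ⟨p0, h01, h02, cs, hcc⟩, hne, x', s1, s2, h1, h2ne, h2⟩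
    have htwin : M.Twin p := FSA.ccrun_twin cs p0 p
      ⟨p0.1, p0.2, [], [], h01, h02, rfl, rfl, rfl⟩ hcc
    obtain ⟨x0, x0', s, sb, h0, h0', hr, hr', hl⟩ := htwin
    obtain ⟨q', hdet, hcard, hmem⟩ := FSA.twin_det hne h0 h0' hr hr' hl
    exact ⟨q', hdet, hcard, p.1, hmem, x', s1, s2, h1, h2ne, h2⟩
  · rintro ⟨q', ⟨w, hdrun⟩, hcard, x, hxq, x', s1, s2, h1, h2ne, h2⟩
    obtain ⟨xb, hxbq, hxbne⟩ := Set.exists_ne_of_one_lt_ncard hcard x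
    have hP : ∀ y ∈ M.obsInit, ∃ x0 ∈ M.init, ∃ s : List T,
        M.labelSeq s = ([] : List O) ∧ M.Run x0 s y := by
      rintro y ⟨x0, h0, s, hrun, hnone⟩
      refine ⟨x0, h0, s, ?_, hrun⟩
      rw [FSA.labelSeq, List.filterMap_eq_nil_iff]
      exact hnone
    obtain ⟨x0, h0, s, hls, hrs⟩ := FSA.detrun_est w M.obsInit q' [] hdrun hP x hxq
    obtain ⟨x0', h0', sb, hls', hrs'⟩ := FSA.detrun_est w M.obsInit q' [] hdrun hP xb hxbq
    obtain ⟨cs, hcs⟩ := FSA.twin_ccrun s sb x0 x0' x xb (by rw [hls, hls']) hrs hrs'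
    exact ⟨(x, xb), ⟨(x0, x0'), h0, h0', cs, hcs⟩, Ne.symm hxbne, x', s1, s2, h1, h2ne, h2⟩
end
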